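/- arXiv:2311.01668 — 2 statements merged into one kernel-verified Lean document; each statement's English description precedes it below -/
import Mathlib

section
/- Let H be a finitely generated subgroup of the free group F(a,b) whose Stallings graph S(H) is cyclically reduced and admits a surjective immersion onto the Stallings graph of ⟨a, b⁻¹ab⟩. Then in S(H), every vertex hyperlink is a subset of {a, a⁻¹, b} or of {a, a⁻¹, b⁻¹}, and consequently the number of a-labeled edges of S(H) is at least the number of b-labeled edges. -/
/-- An `X`-digraph: a finite directed graph with edges labeled by elements of `X`. -/
structure XDigraph (X : Type) where
  V : Type
  E : Type
  [fintypeV : Fintype V]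
  [fintypeE : Fintype E]
  [decV : DecidableEq V]
  [decE : DecidableEq E]
  init : E → V
  term : E → V
  lab : E → X

attribute [instance] XDigraph.fintypeV XDigraph.fintypeE XDigraph.decV XDigraph.decE

namespace XDigraph

variable {X : Type} (S : XDigraph X)

/-- A dart is an edge together with a direction (`true` = forward). -/
abbrev Dart := S.E × Bool

def dInit (d : S.Dart) : S.V := if d.2 then S.init d.1 else S.term d.1

def dTerm (d : S.Dart) : S.V := if d.2 then S.term d.1 else S.init d.1

/-- The label of a dart, as an element of `X ∪ X⁻¹` (encoded as `X × Bool`). -/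
def dLab (d : S.Dart) : X × Bool := (S.lab d.1, d.2)

def dRev (d : S.Dart) : S.Dart := (d.1, !d.2)

/-- The degree of a vertex: the number of darts pointing into it. -/
def degree (v : S.V) : ℕ := (Finset.univ.filter (fun d : S.Dart => S.dTerm d = v)).card

/-- The hyperlink of a vertex: the set of labels of darts pointing into it. -/
def hyperlink (v : S.V) : Set (X × Bool) := {p | ∃ d : S.Dart, S.dTerm d = v ∧ S.dLab d = p}

/-- `S` is folded if darts into the same vertex have distinct labels. -/
def Folded : Prop := ∀ v : S.V, Set.InjOn S.dLab {d : S.Dart | S.dTerm d = v}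

def Adj (u v : S.V) : Prop := ∃ d : S.Dart, S.dInit d = u ∧ S.dTerm d = v

def Connected : Prop := Nonempty S.V ∧ ∀ u v : S.V, Relation.EqvGen S.Adj u v

/-- A cyclically reduced graph has no leaves (vertices of degree one). -/
def NoLeaf : Prop := ∀ v : S.V, S.degree v ≠ 1

def IsPath (p : List S.Dart) : Prop := p.Chain' (fun d d' => S.dTerm d = S.dInit d')

/-- A path is immersed if no dart is immediately followed by its reverse. -/
def Immersed (p : List S.Dart) : Prop := p.Chain' (fun d d' => d' ≠ S.dRev d)

def IsLoopAt (p : List S.Dart) (v : S.V) : Prop :=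
  S.IsPath p ∧ ∀ h : p ≠ [], S.dInit (p.head h) = v ∧ S.dTerm (p.getLast h) = v

def pathLab (p : List S.Dart) : List (X × Bool) := p.map S.dLab

/-- Adjacency using only edges satisfying `P`. -/
def AdjOn (P : S.E → Prop) (u v : S.V) : Prop :=
  ∃ e : S.E, P e ∧ ((S.init e = u ∧ S.term e = v) ∨ (S.init e = v ∧ S.term e = u))

end XDigraph

section Defs

variable {X : Type} [DecidableEq X]

/-- A list of letters in `X ∪ X⁻¹` is freely reduced: no `x x⁻¹` or `x⁻¹ x` subword. -/
def ReducedList (l : List (X × Bool)) : Prop :=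
  List.Chain' (fun p q : X × Bool => p.1 ≠ q.1 ∨ p.2 = q.2) l

/-- `w` is cyclically reduced: every cyclic permutation of its reduced word is freely reduced. -/
def CyclRed (w : FreeGroup X) : Prop :=
  ∀ l : List (X × Bool), w.toWord.IsRotated l → ReducedList l

/-- `w` is readable as the label of an immersed loop of `S` based at `v`. -/
def Reads (S : XDigraph X) (v : S.V) (w : FreeGroup X) : Prop :=
  ∃ p : List S.Dart, S.Immersed p ∧ S.IsLoopAt p v ∧ S.pathLab p = w.toWord

/-- `S`, with basepoint `base`, is the Stallings graph of the subgroup `H`: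
a folded connected core graph whose immersed loops at `base` read exactly the elements of `H`. -/
def PRep (S : XDigraph X) (base : S.V) (H : Subgroup (FreeGroup X)) : Prop :=
  S.Folded ∧ S.Connected ∧ (∀ v : S.V, v ≠ base → 2 ≤ S.degree v) ∧
    ∀ w : FreeGroup X, w ∈ H ↔ Reads S base w

/-- `S` is the cyclically reduced Stallings graph representing the conjugacy class of `H`:
a folded, connected, cyclically reduced graph whose immersed loops read exactly the
cyclically reduced elements of `F(X)` that are conjugate into `H`. -/
def CRep (S : XDigraph X) (H : Subgroup (FreeGroup X)) : Prop :=
  S.Folded ∧ S.Connected ∧ S.NoLeaf ∧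
    ∀ w : FreeGroup X, CyclRed w →
      ((∃ v : S.V, Reads S v w) ↔ ∃ c : FreeGroup X, c * w * c⁻¹ ∈ H)

/-- The element of `F(X)` given by a single letter of `X ∪ X⁻¹`. -/
def iota (p : X × Bool) : FreeGroup X :=
  if p.2 then FreeGroup.of p.1 else (FreeGroup.of p.1)⁻¹

/-- `φ` is the type II Whitehead automorphism with cut `C` and multiplier `m`. -/
def IsWhiteheadII (φ : FreeGroup X ≃* FreeGroup X) (C : Finset (X × Bool)) (m : X × Bool) :
    Prop :=
  m ∈ C ∧ (m.1, !m.2) ∉ C ∧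
    ∀ x : X, φ (FreeGroup.of x) =
      if x = m.1 then FreeGroup.of x
      else (if (x, false) ∈ C then (iota m)⁻¹ else 1) * FreeGroup.of x *
           (if (x, true) ∈ C then iota m else 1)

/-- The number of edges of `S` labeled `x`. -/
def edgeCount (S : XDigraph X) (x : X) : ℕ :=
  (Finset.univ.filter (fun e : S.E => S.lab e = x)).card

/-- The hyperlink of a vertex, as a finset. -/
def hyperlinkF (S : XDigraph X) (v : S.V) : Finset (X × Bool) :=
  (Finset.univ.filter (fun d : S.Dart => S.dTerm d = v)).image S.dLab

/-- The capacity of the cut `C` in the Whitehead hypergraph of `S`: the number of vertices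
whose hyperlink meets both `C` and its complement. -/
def cap (S : XDigraph X) (C : Finset (X × Bool)) : ℕ :=
  (Finset.univ.filter
    (fun v : S.V => (hyperlinkF S v ∩ C).Nonempty ∧ (hyperlinkF S v \ C).Nonempty)).card

/-- The degree of the letter `m` in the Whitehead hypergraph of `S`: the number of vertices
whose hyperlink contains `m`. -/
def wdeg (S : XDigraph X) (m : X × Bool) : ℕ :=
  (Finset.univ.filter (fun v : S.V => m ∈ hyperlinkF S v)).card

/-- The number of connected components of the subgraph of `S` spanned by the edges
satisfying `P`, on the vertex set `{v | W v}`. -/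
noncomputable def componentsCount (S : XDigraph X) (P : S.E → Prop) (W : S.V → Prop) : ℕ :=
  Nat.card (Quotient (Setoid.comap (Subtype.val : {v : S.V // W v} → S.V)
    (Relation.EqvGen.setoid (S.AdjOn P))))

/-- The connected component of `u` in `S - e₀` has rank one (first Betti number one),
i.e. it has as many edges as vertices. -/
def ComponentRankOne (S : XDigraph X) (e₀ : S.E) (u : S.V) : Prop :=
  Nat.card {e : S.E // e ≠ e₀ ∧ Relation.EqvGen (S.AdjOn (· ≠ e₀)) u (S.init e)} =
    Nat.card {v : S.V // Relation.EqvGen (S.AdjOn (· ≠ e₀)) u v}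

/-- Property (L): `S` has a unique `v`-labeled edge `e₀`, and `S - e₀` has exactly two
connected components, at least one of which has rank one. -/
def PropertyL (S : XDigraph X) (v : X) : Prop :=
  ∃ e₀ : S.E, S.lab e₀ = v ∧ (∀ e : S.E, S.lab e = v → e = e₀) ∧
    componentsCount S (· ≠ e₀) (fun _ => True) = 2 ∧
    ∃ u : S.V, ComponentRankOne S e₀ u

/-- Property (S) for the partition `X = A ⊔ Aᶜ`: `S` is connected and cyclically reduced,
the `A`-edges form a bouquet of single-edge loops at one vertex, and the subgraph spanned
by the remaining edges is connected of rank one. -/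
def PropertyS (S : XDigraph X) (A : Set X) : Prop :=
  S.Connected ∧ S.NoLeaf ∧
    (∃ v₀ : S.V, ∀ e : S.E, S.lab e ∈ A → S.init e = v₀ ∧ S.term e = v₀) ∧
    Nat.card {e : S.E // S.lab e ∉ A} =
      Nat.card {w : S.V // ∃ e : S.E, S.lab e ∉ A ∧ (S.init e = w ∨ S.term e = w)} ∧
    ∀ u w : S.V, (∃ e : S.E, S.lab e ∉ A ∧ (S.init e = u ∨ S.term e = u)) →
      (∃ e : S.E, S.lab e ∉ A ∧ (S.init e = w ∨ S.term e = w)) →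
      Relation.EqvGen (S.AdjOn (fun e => S.lab e ∉ A)) u w

/-- An immersion of `X`-digraphs: a label- and orientation-preserving graph map which is
locally injective on links. -/
structure Immersion (S T : XDigraph X) where
  onV : S.V → T.V
  onE : S.E → T.E
  map_init : ∀ e : S.E, T.init (onE e) = onV (S.init e)
  map_term : ∀ e : S.E, T.term (onE e) = onV (S.term e)
  map_lab : ∀ e : S.E, T.lab (onE e) = S.lab e
  locInj : ∀ (v : S.V) (d d' : S.Dart), S.dTerm d = v → S.dTerm d' = v →
    ((onE d.1, d.2) : T.Dart) = (onE d'.1, d'.2) → d = d'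

/-- `K` is a proper free factor of `F(X)`: there is a nontrivial `L` with `F(X) = K ∗ L`. -/
def IsProperFreeFactor (K : Subgroup (FreeGroup X)) : Prop :=
  ∃ L : Subgroup (FreeGroup X), L ≠ ⊥ ∧
    Function.Bijective (Monoid.Coprod.lift K.subtype L.subtype)

end Defs


/-- The Stallings graph of `⟨a, b⁻¹ a b⟩ ≤ F(a, b)`, with `a = 0`, `b = 1`:
two vertices, an `a`-loop at each, and a single `b`-edge between them. -/
def T0 : XDigraph (Fin 2) where
  V := Bool
  E := Fin 3
  init := fun e => decide ((e : ℕ) = 1)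
  term := fun e => decide (1 ≤ (e : ℕ))
  lab := fun e => if (e : ℕ) = 2 then 1 else 0

private lemma T0_dart_mem (S : XDigraph (Fin 2)) (F : Immersion S T0)
    (e : S.E) (b : Bool) :
    (F.onV (S.dTerm (e, b)) = true →
      S.dLab (e, b) ∈
        ({((0 : Fin 2), true), ((0 : Fin 2), false), ((1 : Fin 2), true)} :
          Set (Fin 2 × Bool))) ∧
    (F.onV (S.dTerm (e, b)) = false →
      S.dLab (e, b) ∈
        ({((0 : Fin 2), true), ((0 : Fin 2), false), ((1 : Fin 2), false)} :
          Set (Fin 2 × Bool))) := by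
  have hlab : S.dLab (e, b) = (T0.lab (F.onE e), b) := by
    simp [XDigraph.dLab, F.map_lab]
  have hterm : T0.dTerm (F.onE e, b) = F.onV (S.dTerm (e, b)) := by
    cases b <;> simp [XDigraph.dTerm, F.map_init, F.map_term]
  rw [hlab, ← hterm]
  set e' := F.onE e with he'
  clear_value e'
  fin_cases e' <;> cases b <;>
    simp [T0, XDigraph.dTerm, Set.mem_insert_iff, Prod.ext_iff]

/-- if the cyclically reduced Stallings graph `S` of `H ≤ F(a,b)` admits a
surjective immersion onto the Stallings graph of `⟨a, b⁻¹ a b⟩`, then every vertex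
hyperlink of `S` is contained in `{a, a⁻¹, b}` or `{a, a⁻¹, b⁻¹}`, and the number of
`a`-edges is at least the number of `b`-edges. -/
theorem immersion_onto_loop_vertex_graph_hyperlinks_and_counts
    (H : Subgroup (FreeGroup (Fin 2))) (S : XDigraph (Fin 2))
    (hS : CRep S H) (F : Immersion S T0)
    (hsurjV : Function.Surjective F.onV) (hsurjE : Function.Surjective F.onE) :
    (∀ v : S.V,
        S.hyperlink v ⊆ {((0 : Fin 2), true), ((0 : Fin 2), false), ((1 : Fin 2), true)} ∨
        S.hyperlink v ⊆ {((0 : Fin 2), true), ((0 : Fin 2), false), ((1 : Fin 2), false)}) ∧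
      edgeCount S 1 ≤ edgeCount S 0 := by
  classical
  obtain ⟨hfold, hconn, hnoleaf, -⟩ := hS
  have hhyp : ∀ v : S.V,
      S.hyperlink v ⊆ {((0 : Fin 2), true), ((0 : Fin 2), false), ((1 : Fin 2), true)} ∨
      S.hyperlink v ⊆ {((0 : Fin 2), true), ((0 : Fin 2), false), ((1 : Fin 2), false)} := by
    intro v
    cases h : F.onV v with
    | true =>
      left
      rintro p ⟨⟨e, b⟩, hd, rfl⟩
      exact (T0_dart_mem S F e b).1 (by rw [hd, h])
    | false =>
      right
      rintro p ⟨⟨e, b⟩, hd, rfl⟩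
      exact (T0_dart_mem S F e b).2 (by rw [hd, h])
  refine ⟨hhyp, ?_⟩
  -- any two b-darts into the same vertex coincide
  have key : ∀ d d' : S.Dart, S.lab d.1 = 1 → S.lab d'.1 = 1 →
      S.dTerm d = S.dTerm d' → d = d' := by
    intro d d' h1 h1' ht
    have hmem : S.dLab d ∈ S.hyperlink (S.dTerm d') := ⟨d, ht, rfl⟩
    have hmem' : S.dLab d' ∈ S.hyperlink (S.dTerm d') := ⟨d', rfl, rfl⟩
    have hb : d.2 = d'.2 := by
      rcases hhyp (S.dTerm d') with hsub | hsub <;>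
      · have h2 := hsub hmem
        have h2' := hsub hmem'
        simp only [XDigraph.dLab, h1, h1', Set.mem_insert_iff, Set.mem_singleton_iff,
          Prod.ext_iff] at h2 h2'
        have e01 : (1 : Fin 2) ≠ 0 := by decide
        rcases h2 with ⟨h,_⟩|⟨h,_⟩|⟨_,h⟩ <;> rcases h2' with ⟨h',_⟩|⟨h',_⟩|⟨_,h'⟩ <;>
          first | exact absurd h e01 | exact absurd h' e01 | rw [h, h']
    refine hfold (S.dTerm d') ht rfl ?_
    simp [XDigraph.dLab, h1, h1', hb]
  have fin2 : ∀ x : Fin 2, x ≠ 0 → x = 1 := by decide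
  -- every b-dart has an a-dart into the same vertex
  have exA : ∀ d : S.Dart, S.lab d.1 = 1 →
      ∃ d' : S.Dart, S.lab d'.1 = 0 ∧ S.dTerm d' = S.dTerm d := by
    intro d hd
    have hmem : d ∈ Finset.univ.filter (fun d' : S.Dart => S.dTerm d' = S.dTerm d) := by
      simp
    have h1 : 1 ≤ S.degree (S.dTerm d) := Finset.card_pos.mpr ⟨d, hmem⟩
    have h2 : 1 < S.degree (S.dTerm d) := lt_of_le_of_ne h1 (Ne.symm (hnoleaf _))
    obtain ⟨d', hd'mem, hne⟩ := Finset.exists_mem_ne h2 d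
    have hterm' : S.dTerm d' = S.dTerm d := (Finset.mem_filter.mp hd'mem).2
    refine ⟨d', ?_, hterm'⟩
    by_contra hlab0
    exact hne (key d' d (fin2 _ hlab0) hd hterm')
  let A : Finset S.Dart := Finset.univ.filter fun d => S.lab d.1 = 0
  let B : Finset S.Dart := Finset.univ.filter fun d => S.lab d.1 = 1
  have hBA : B.card ≤ A.card := by
    apply Finset.card_le_card_of_injOn
      (fun d => if h : ∃ d' : S.Dart, S.lab d'.1 = 0 ∧ S.dTerm d' = S.dTerm d
        then h.choose else d)
    · intro d hd
      have hdB : S.lab d.1 = 1 := (Finset.mem_filter.mp hd).2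
      have hex := exA d hdB
      beta_reduce
      rw [dif_pos hex]
      exact Finset.mem_filter.mpr ⟨Finset.mem_univ _, hex.choose_spec.1⟩
    · intro d hd d' hd' heq
      have hdB : S.lab d.1 = 1 := (Finset.mem_filter.mp hd).2
      have hdB' : S.lab d'.1 = 1 := (Finset.mem_filter.mp hd').2
      have hex := exA d hdB
      have hex' := exA d' hdB'
      simp only [dif_pos hex, dif_pos hex'] at heq
      have t1 := hex.choose_spec.2
      have t2 := hex'.choose_spec.2
      rw [heq] at t1
      exact key d d' hdB hdB' (t1.symm.trans t2)
  have cardA : A.card = 2 * edgeCount S 0 := by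
    have hA : A = (Finset.univ.filter fun e : S.E => S.lab e = 0) ×ˢ Finset.univ := by
      ext ⟨e, b⟩; simp [A]
    rw [hA, Finset.card_product, edgeCount]
    simp [Nat.mul_comm]
  have cardB : B.card = 2 * edgeCount S 1 := by
    have hB : B = (Finset.univ.filter fun e : S.E => S.lab e = 1) ×ˢ Finset.univ := by
      ext ⟨e, b⟩; simp [B]
    rw [hB, Finset.card_product, edgeCount]
    simp [Nat.mul_comm]
  omega
end

section
/- Let S be a cyclically reduced X-digraph such that the subgraph of S consisting of edges labeled b (for a fixed b ∈ X) has the property that the sets of initial vertices and of terminal vertices of b-edges are disjoint, and the complement S - E_b(S) of the b-edges has k connected components, each of which is either a path or a cycle in the edges of X \ {b} and contains at least one edge. Then #E_{X\{b\}}(S) ≥ 2·#E_b(S) - k and #E_{X\{b\}}(S) ≥ k, hence #E_{X\{b\}}(S) ≥ #E_b(S). -/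
section Abstract
open Relation
variable {V : Type} [DecidableEq V]

private lemma eqv_tr {r : V → V → Prop} {a b c : V} (h1 : EqvGen r a b)
    (h2 : EqvGen r b c) : EqvGen r a c := EqvGen.trans _ _ _ h1 h2

private lemma eqv_sy {r : V → V → Prop} {a b : V} (h1 : EqvGen r a b) :
    EqvGen r b a := EqvGen.symm _ _ h1

def fAdj (F : Finset (V × V)) (x y : V) : Prop :=
  ∃ p ∈ F, (p.1 = x ∧ p.2 = y) ∨ (p.1 = y ∧ p.2 = x)

private lemma eqvGen_insert (F : Finset (V × V)) (p : V × V) (x y : V)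
    (h : EqvGen (fAdj (insert p F)) x y) :
    EqvGen (fAdj F) x y ∨
      (EqvGen (fAdj F) x p.1 ∧ EqvGen (fAdj F) p.2 y) ∨
      (EqvGen (fAdj F) x p.2 ∧ EqvGen (fAdj F) p.1 y) := by
  induction h with
  | rel a c hac =>
    obtain ⟨q, hq, hc⟩ := hac
    rcases Finset.mem_insert.1 hq with rfl | hq
    · rcases hc with ⟨h1, h2⟩ | ⟨h1, h2⟩
      · exact Or.inr (Or.inl ⟨by rw [h1]; exact EqvGen.refl _, by rw [h2]; exact EqvGen.refl _⟩)
      · exact Or.inr (Or.inr ⟨by rw [h2]; exact EqvGen.refl _, by rw [h1]; exact EqvGen.refl _⟩)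
    · exact Or.inl (EqvGen.rel _ _ ⟨q, hq, hc⟩)
  | refl a => exact Or.inl (EqvGen.refl a)
  | symm a c _ ih =>
    rcases ih with h | ⟨h1, h2⟩ | ⟨h1, h2⟩
    · exact Or.inl (eqv_sy h)
    · exact Or.inr (Or.inr ⟨eqv_sy h2, eqv_sy h1⟩)
    · exact Or.inr (Or.inl ⟨eqv_sy h2, eqv_sy h1⟩)
  | trans a c d _ _ ih1 ih2 =>
    rcases ih1 with h | ⟨h1, h2⟩ | ⟨h1, h2⟩ <;>
      rcases ih2 with h' | ⟨h1', h2'⟩ | ⟨h1', h2'⟩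
    · exact Or.inl (eqv_tr h h')
    · exact Or.inr (Or.inl ⟨eqv_tr h h1', h2'⟩)
    · exact Or.inr (Or.inr ⟨eqv_tr h h1', h2'⟩)
    · exact Or.inr (Or.inl ⟨h1, eqv_tr h2 h'⟩)
    · exact Or.inl (eqv_tr h1 (eqv_tr (eqv_sy (eqv_tr h2 h1')) h2'))
    · exact Or.inl (eqv_tr h1 h2')
    · exact Or.inr (Or.inr ⟨h1, eqv_tr h2 h'⟩)
    · exact Or.inl (eqv_tr h1 h2')
    · exact Or.inl (eqv_tr h1 (eqv_tr (eqv_sy (eqv_tr h2 h1')) h2'))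

private lemma card_quot_remove [Fintype V] (F : Finset (V × V)) (p : V × V) :
    Nat.card (Quotient (EqvGen.setoid (fAdj F))) ≤
      Nat.card (Quotient (EqvGen.setoid (fAdj (insert p F)))) + 1 := by
  classical
  have mono : ∀ x y : V, EqvGen (fAdj F) x y → EqvGen (fAdj (insert p F)) x y :=
    fun x y h => Relation.EqvGen.mono (r := fAdj F) (p := fAdj (insert p F)) (fun a b ⟨q, hq, hc⟩ =>
      ⟨q, Finset.mem_insert_of_mem hq, hc⟩) x y h
  set QF := Quotient (EqvGen.setoid (fAdj F))
  set QI := Quotient (EqvGen.setoid (fAdj (insert p F)))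
  let g0 : QF → QI := Quotient.map (fun x => x) mono
  let g : QF → Option QI := fun c =>
    if c = Quotient.mk _ p.1 then none else some (g0 c)
  have hg : Function.Injective g := by
    intro c1 c2 hgc
    by_cases h1 : c1 = Quotient.mk _ p.1 <;> by_cases h2 : c2 = Quotient.mk _ p.1
    · exact h1.trans h2.symm
    · simp [g, h1, h2] at hgc
    · simp [g, h1, h2] at hgc
    · simp only [g, h1, h2, if_neg, if_false] at hgc
      obtain ⟨x, rfl⟩ := Quotient.exists_rep c1
      obtain ⟨y, rfl⟩ := Quotient.exists_rep c2
      have : EqvGen (fAdj (insert p F)) x y := Quotient.exact (Option.some_injective _ hgc)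
      rcases eqvGen_insert F p x y this with h | ⟨ha, hb⟩ | ⟨ha, hb⟩
      · exact Quotient.sound h
      · exact absurd (Quotient.sound ha) h1
      · exact absurd (Quotient.sound (eqv_sy hb)) h2
  calc Nat.card QF ≤ Nat.card (Option QI) := Nat.card_le_card_of_injective g hg
    _ = Nat.card QI + 1 := Finite.card_option

private lemma card_le_edges_add_components [Fintype V] (F : Finset (V × V)) :
    Fintype.card V ≤ F.card + Nat.card (Quotient (EqvGen.setoid (fAdj F))) := by
  classical
  induction F using Finset.induction with
  | empty =>
    have key : ∀ x y : V, EqvGen (fAdj (∅ : Finset (V × V))) x y → x = y := by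
      intro x y h
      induction h with
      | rel a c hac => exact absurd hac.choose_spec.1 (Finset.notMem_empty _)
      | refl => rfl
      | symm _ _ _ ih => exact ih.symm
      | trans _ _ _ _ _ ih1 ih2 => exact ih1.trans ih2
    have : Function.Injective (Quotient.mk (EqvGen.setoid (fAdj (∅ : Finset (V × V))))) :=
      fun x y h => key x y (Quotient.exact h)
    simpa [Nat.card_eq_fintype_card] using Nat.card_le_card_of_injective _ this
  | @insert p F hp ih =>
    calc Fintype.card V ≤ F.card + Nat.card (Quotient (EqvGen.setoid (fAdj F))) := ih
      _ ≤ F.card + (Nat.card (Quotient (EqvGen.setoid (fAdj (insert p F)))) + 1) :=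
          Nat.add_le_add_left (card_quot_remove F p) _
      _ = (insert p F).card + Nat.card (Quotient (EqvGen.setoid (fAdj (insert p F)))) := by
          rw [Finset.card_insert_of_notMem hp]; omega

end Abstract

open Relation

/-- let `S` be a folded cyclically reduced `X`-digraph (every vertex has
degree at least two) in which the initial and terminal vertices of `b`-edges are disjoint
and the complement of the `b`-edges has `k` components, each a path or a cycle (every
vertex meets at most two non-`b` darts). Then `#E_{X\b} + k ≥ 2·#E_b`, `#E_{X\b} ≥ k`,
and hence `#E_{X\b} ≥ #E_b`. -/
theorem path_cycle_complement_edge_count_bounds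
    {X : Type} [DecidableEq X] (S : XDigraph X) (b : X)
    (hfold : S.Folded) (hcyc : ∀ v : S.V, 2 ≤ S.degree v)
    (hdisj : ∀ e e' : S.E, S.lab e = b → S.lab e' = b → S.init e ≠ S.term e')
    (hpathcyc : ∀ v : S.V,
      (Finset.univ.filter (fun d : S.Dart => S.lab d.1 ≠ b ∧ S.dTerm d = v)).card ≤ 2) :
    2 * edgeCount S b ≤
        (Finset.univ.filter (fun e : S.E => S.lab e ≠ b)).card +
          componentsCount S (fun e => S.lab e ≠ b)
            (fun v => ∃ e : S.E, S.lab e ≠ b ∧ (S.init e = v ∨ S.term e = v)) ∧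
      componentsCount S (fun e => S.lab e ≠ b)
          (fun v => ∃ e : S.E, S.lab e ≠ b ∧ (S.init e = v ∨ S.term e = v)) ≤
        (Finset.univ.filter (fun e : S.E => S.lab e ≠ b)).card ∧
      edgeCount S b ≤ (Finset.univ.filter (fun e : S.E => S.lab e ≠ b)).card := by
  classical
  set P : S.E → Prop := fun e => S.lab e ≠ b with hP
  set W : S.V → Prop := fun v => ∃ e : S.E, S.lab e ≠ b ∧ (S.init e = v ∨ S.term e = v) with hW
  -- every b-edge endpoint is in W
  have exists_other : ∀ (v : S.V) (d0 : S.Dart), S.dTerm d0 = v →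
      ∃ d : S.Dart, S.dTerm d = v ∧ d ≠ d0 := by
    intro v d0 h0
    have h2 : 1 < (Finset.univ.filter (fun d : S.Dart => S.dTerm d = v)).card := hcyc v
    obtain ⟨d, hd, hne⟩ := Finset.exists_mem_ne h2 d0
    exact ⟨d, (Finset.mem_filter.1 hd).2, hne⟩
  have winit : ∀ e : S.E, S.lab e = b → W (S.init e) := by
    intro e he
    obtain ⟨d, hd, hne⟩ := exists_other (S.init e) (e, false) (by simp [XDigraph.dTerm])
    have hlab : S.lab d.1 ≠ b := by
      intro hb
      rcases Bool.eq_false_or_eq_true d.2 with h2 | h2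
      · -- d.2 = true : term d.1 = init e, contradicts hdisj
        have : S.dTerm d = S.term d.1 := by simp [XDigraph.dTerm, h2]
        exact hdisj e d.1 he hb (this.symm.trans hd).symm
      · -- d = (d.1, false), dTerm d = init d.1 = init e, same label as (e,false)
        apply hne
        apply hfold (S.init e) (by simpa using hd) (by simp [Set.mem_setOf_eq, XDigraph.dTerm])
        simp [XDigraph.dLab, h2, hb, he]
    refine ⟨d.1, hlab, ?_⟩
    rcases Bool.eq_false_or_eq_true d.2 with h2 | h2
    · right; simpa [XDigraph.dTerm, h2] using hd
    · left; simpa [XDigraph.dTerm, h2] using hd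
  have wterm : ∀ e : S.E, S.lab e = b → W (S.term e) := by
    intro e he
    obtain ⟨d, hd, hne⟩ := exists_other (S.term e) (e, true) (by simp [XDigraph.dTerm])
    have hlab : S.lab d.1 ≠ b := by
      intro hb
      rcases Bool.eq_false_or_eq_true d.2 with h2 | h2
      · apply hne
        apply hfold (S.term e) (by simpa using hd) (by simp [Set.mem_setOf_eq, XDigraph.dTerm])
        simp [XDigraph.dLab, h2, hb, he]
      · have : S.dTerm d = S.init d.1 := by simp [XDigraph.dTerm, h2]
        exact hdisj d.1 e hb he (this.symm.trans hd)
    refine ⟨d.1, hlab, ?_⟩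
    rcases Bool.eq_false_or_eq_true d.2 with h2 | h2
    · right; simpa [XDigraph.dTerm, h2] using hd
    · left; simpa [XDigraph.dTerm, h2] using hd
  -- the subtype of W-vertices
  set VW := {v : S.V // W v} with hVW
  -- injection (b-edges × Bool) into VW
  have card_b : 2 * edgeCount S b ≤ Nat.card VW := by
    let f : {e : S.E // S.lab e = b} × Bool → VW := fun p =>
      if p.2 then ⟨S.term p.1.1, wterm p.1.1 p.1.2⟩ else ⟨S.init p.1.1, winit p.1.1 p.1.2⟩
    have hfinj : Function.Injective f := by
      rintro ⟨⟨e, he⟩, i⟩ ⟨⟨e', he'⟩, i'⟩ hfe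
      have hval : (f (⟨e, he⟩, i)).1 = (f (⟨e', he'⟩, i')).1 := by rw [hfe]
      cases i <;> cases i' <;>
        simp only [f, if_true, if_false, Bool.false_eq_true] at hval
      · -- init e = init e'
        have hd : ((e, false) : S.Dart) = (e', false) := by
          apply hfold (S.init e)
            (by simp [Set.mem_setOf_eq, XDigraph.dTerm])
            (by simp [Set.mem_setOf_eq, XDigraph.dTerm, hval])
          simp [XDigraph.dLab, he, he']
        have hee : e = e' := congrArg Prod.fst hd
        subst hee; rfl
      · exact absurd hval (hdisj e e' he he')
      · exact absurd hval.symm (hdisj e' e he' he)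
      · have hd : ((e, true) : S.Dart) = (e', true) := by
          apply hfold (S.term e)
            (by simp [Set.mem_setOf_eq, XDigraph.dTerm])
            (by simp [Set.mem_setOf_eq, XDigraph.dTerm, hval])
          simp [XDigraph.dLab, he, he']
        have hee : e = e' := congrArg Prod.fst hd
        subst hee; rfl
    calc 2 * edgeCount S b = Nat.card ({e : S.E // S.lab e = b} × Bool) := by
          rw [Nat.card_prod, Nat.card_eq_fintype_card, Nat.card_eq_fintype_card,
            Fintype.card_bool, Fintype.card_subtype, edgeCount, Nat.mul_comm]
      _ ≤ Nat.card VW := Nat.card_le_card_of_injective f hfinj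
  -- the finset of non-b edges as pairs in VW
  let F : Finset (VW × VW) := Finset.univ.image
    (fun e : {e : S.E // S.lab e ≠ b} =>
      ((⟨S.init e.1, ⟨e.1, e.2, Or.inl rfl⟩⟩ : VW), (⟨S.term e.1, ⟨e.1, e.2, Or.inr rfl⟩⟩ : VW)))
  have hFcard : F.card ≤ (Finset.univ.filter (fun e : S.E => S.lab e ≠ b)).card := by
    calc F.card ≤ (Finset.univ : Finset {e : S.E // S.lab e ≠ b}).card := Finset.card_image_le
      _ = _ := by rw [Finset.card_univ, Fintype.card_subtype]
  -- relate the two equivalence relations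
  have fwd : ∀ u v : S.V, EqvGen (S.AdjOn P) u v →
      u = v ∨ (W u ∧ W v ∧
        ∀ (hu : W u) (hv : W v), EqvGen (fAdj F) ⟨u, hu⟩ ⟨v, hv⟩) := by
    intro u v h
    induction h with
    | rel a c hac =>
      obtain ⟨e, he, hor⟩ := hac
      have hwa : W a := by
        rcases hor with ⟨h1, _⟩ | ⟨_, h2⟩
        · exact ⟨e, he, Or.inl h1⟩
        · exact ⟨e, he, Or.inr h2⟩
      have hwc : W c := by
        rcases hor with ⟨_, h2⟩ | ⟨h1, _⟩
        · exact ⟨e, he, Or.inr h2⟩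
        · exact ⟨e, he, Or.inl h1⟩
      refine Or.inr ⟨hwa, hwc, fun hu hv => ?_⟩
      apply EqvGen.rel
      refine ⟨((⟨S.init e, ⟨e, he, Or.inl rfl⟩⟩ : VW), (⟨S.term e, ⟨e, he, Or.inr rfl⟩⟩ : VW)),
        Finset.mem_image_of_mem _ (Finset.mem_univ (⟨e, he⟩ : {e : S.E // S.lab e ≠ b})), ?_⟩
      rcases hor with ⟨h1, h2⟩ | ⟨h1, h2⟩
      · exact Or.inl ⟨Subtype.ext h1, Subtype.ext h2⟩
      · exact Or.inr ⟨Subtype.ext h1, Subtype.ext h2⟩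
    | refl a => exact Or.inl rfl
    | symm a c _ ih =>
      rcases ih with rfl | ⟨ha, hc, ih⟩
      · exact Or.inl rfl
      · exact Or.inr ⟨hc, ha, fun hu hv => eqv_sy (ih hv hu)⟩
    | trans a c d _ _ ih1 ih2 =>
      rcases ih1 with rfl | ⟨ha, hc, ih1⟩
      · exact ih2
      · rcases ih2 with rfl | ⟨hc', hd', ih2⟩
        · exact Or.inr ⟨ha, hc, ih1⟩
        · exact Or.inr ⟨ha, hd', fun hu hv => eqv_tr (ih1 hu hc) (ih2 hc hv)⟩
  have bwd : ∀ x y : VW, EqvGen (fAdj F) x y → EqvGen (S.AdjOn P) x.1 y.1 := by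
    intro x y h
    induction h with
    | rel a c hac =>
      obtain ⟨p, hp, hc⟩ := hac
      obtain ⟨e, _, rfl⟩ := Finset.mem_image.1 hp
      apply EqvGen.rel
      rcases hc with ⟨h1, h2⟩ | ⟨h1, h2⟩
      · exact ⟨e.1, e.2, Or.inl ⟨congrArg Subtype.val h1, congrArg Subtype.val h2⟩⟩
      · exact ⟨e.1, e.2, Or.inr ⟨congrArg Subtype.val h1, congrArg Subtype.val h2⟩⟩
    | refl a => exact EqvGen.refl _
    | symm a c _ ih => exact EqvGen.symm _ _ ih
    | trans a c d _ _ ih1 ih2 => exact EqvGen.trans _ _ _ ih1 ih2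
  -- the two setoids on VW agree
  have hsetoid : Setoid.comap (Subtype.val : VW → S.V) (EqvGen.setoid (S.AdjOn P)) =
      EqvGen.setoid (fAdj F) := by
    apply Setoid.ext
    intro x y
    constructor
    · intro h
      rcases fwd x.1 y.1 h with heq | ⟨_, _, h'⟩
      · have hxy : x = y := Subtype.ext heq
        subst hxy
        exact (EqvGen.setoid (fAdj F)).refl x
      · exact h' x.2 y.2
    · intro h
      exact bwd x y h
  have hcomp : componentsCount S P W = Nat.card (Quotient (EqvGen.setoid (fAdj F))) := by
    unfold componentsCount
    rw [hsetoid]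
  -- claim 1
  have claim1 : 2 * edgeCount S b ≤
      (Finset.univ.filter (fun e : S.E => S.lab e ≠ b)).card + componentsCount S P W := by
    calc 2 * edgeCount S b ≤ Nat.card VW := card_b
      _ = Fintype.card VW := Nat.card_eq_fintype_card
      _ ≤ F.card + Nat.card (Quotient (EqvGen.setoid (fAdj F))) :=
          card_le_edges_add_components F
      _ ≤ (Finset.univ.filter (fun e : S.E => S.lab e ≠ b)).card + componentsCount S P W := by
          rw [hcomp]; exact Nat.add_le_add_right hFcard _
  -- claim 2 : componentsCount ≤ number of non-b edges, via surjection
  have claim2 : componentsCount S P W ≤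
      (Finset.univ.filter (fun e : S.E => S.lab e ≠ b)).card := by
    set sd := Setoid.comap (Subtype.val : VW → S.V) (EqvGen.setoid (S.AdjOn P)) with hsd
    let g : {e : S.E // S.lab e ≠ b} → Quotient sd :=
      fun e => Quotient.mk sd (⟨S.init e.1, ⟨e.1, e.2, Or.inl rfl⟩⟩ : VW)
    have hgsurj : Function.Surjective g := by
      intro q
      obtain ⟨⟨v, hv⟩, rfl⟩ := Quotient.exists_rep q
      obtain ⟨e, he, hor⟩ := hv
      refine ⟨⟨e, he⟩, Quotient.sound ?_⟩
      show EqvGen (S.AdjOn P) (S.init e) v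
      rcases hor with h1 | h1
      · rw [h1]; exact EqvGen.refl v
      · exact EqvGen.rel _ _ ⟨e, he, Or.inl ⟨rfl, h1⟩⟩
    calc componentsCount S P W = Nat.card (Quotient sd) := rfl
      _ ≤ Nat.card {e : S.E // S.lab e ≠ b} := Nat.card_le_card_of_surjective g hgsurj
      _ = _ := by rw [Nat.card_eq_fintype_card, Fintype.card_subtype]
  exact ⟨claim1, claim2, by omega⟩
end
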